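/- arXiv:1705.10277 — 3 statements merged into one kernel-verified Lean document; each statement's English description precedes it below -/
import Mathlib

section
/- If a nonempty word w is not an inverse Lyndon word, then there exists a nonempty proper prefix p of w, with w = ps, such that p is an inverse Lyndon word and p ≪ s. -/
def LexLt {α : Type*} [LinearOrder α] (x y : List α) : Prop :=
  List.Lex (· < ·) x y

def LexLl {α : Type*} [LinearOrder α] (x y : List α) : Prop :=
  LexLt x y ∧ ¬ (x <+: y ∧ x ≠ y)

def IsInvLyndonWord {α : Type*} [LinearOrder α] (w : List α) : Prop :=
  w ≠ [] ∧ ∀ s : List α, s <:+ w → s ≠ w → s ≠ [] → LexLt s w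

section aux
variable {α : Type*} [LinearOrder α]

lemma lexlt_append_cancel : ∀ (p x y : List α), LexLt (p ++ x) (p ++ y) → LexLt x y := by
  intro p
  induction p with
  | nil => intro x y h; exact h
  | cons a p ih =>
      intro x y h
      simp only [List.cons_append] at h
      exact ih x y ((List.lex_cons_iff).1 h)

lemma lexlt_of_proper_prefix : ∀ (x t : List α), t ≠ [] → LexLt x (x ++ t) := by
  intro x
  induction x with
  | nil =>
      intro t ht
      cases t with
      | nil => exact absurd rfl ht
      | cons a t => exact List.Lex.nil
  | cons a x ih =>
      intro t ht
      exact List.Lex.cons (ih t ht)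

lemma lexlt_asymm {x y : List α} (h : LexLt x y) (h' : LexLt y x) : False :=
  asymm (r := List.Lex ((· < ·) : α → α → Prop)) h h'

lemma lexlt_trans {x y z : List α} (h : LexLt x y) (h' : LexLt y z) : LexLt x z :=
  List.lex_trans (fun a b => lt_trans a b) h h'

lemma lexlt_trichotomy (x y : List α) : LexLt x y ∨ x = y ∨ LexLt y x :=
  trichotomous (r := List.Lex ((· < ·) : α → α → Prop)) x y

/-- p ≺ s and p not a prefix of s implies p ≺ s++u and p not prefix of s++u. -/
lemma lexll_append (p s u : List α) (h1 : LexLt p s) (h2 : ¬ p <+: s) :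
    LexLl p (s ++ u) := by
  constructor
  · exact List.Lex.append_right _ u h1
  · rintro ⟨hpre, -⟩
    rcases le_or_gt p.length s.length with hl | hl
    · exact h2 (List.prefix_of_prefix_length_le hpre (s.prefix_append u) hl)
    · have hsp : s <+: p := List.prefix_of_prefix_length_le (s.prefix_append u) hpre hl.le
      obtain ⟨t, rfl⟩ := hsp
      rcases eq_or_ne t [] with rfl | ht
      · simp at hl
      · exact lexlt_asymm h1 (lexlt_of_proper_prefix s t ht)

/-- Descent: from a suffix s with w ≺ s, get a factorization w = p ++ s' with p ≪ s'. -/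
lemma descent (w : List α) : ∀ n (s : List α), s.length ≤ n → s <:+ w → s ≠ [] → s ≠ w →
    LexLt w s → ∃ p s' : List α, p ≠ [] ∧ s' ≠ [] ∧ w = p ++ s' ∧ LexLl p s' := by
  intro n
  induction n with
  | zero =>
      intro s hn _ hs _ _
      exact absurd (List.length_eq_zero_iff.1 (Nat.le_zero.1 hn)) hs
  | succ n ih =>
      intro s hn hsuf hs hsw hws
      obtain ⟨p, rfl⟩ := hsuf
      have hp : p ≠ [] := by rintro rfl; simp at hsw
      by_cases hpre : p <+: s
      · obtain ⟨t, rfl⟩ := hpre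
        rcases eq_or_ne t [] with rfl | ht
        · simp only [List.append_nil] at hws ⊢
          exact absurd (lexlt_of_proper_prefix p p hp) (fun h => lexlt_asymm hws h)
        · -- w = p ++ (p ++ t), w ≺ p ++ t gives (p++t) ≺ t, so w ≺ t
          have h1 : LexLt (p ++ t) t := lexlt_append_cancel p _ _ hws
          have h2 : LexLt (p ++ (p ++ t)) t := lexlt_trans hws h1
          have htlen : t.length ≤ n := by
            have := hn
            have hp' : 0 < p.length := List.length_pos_iff.2 hp
            simp only [List.length_append] at this ⊢
            omega
          have htw : t ≠ p ++ (p ++ t) := by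
            intro he
            have : t.length = p.length + (p.length + t.length) := by
              conv_lhs => rw [he]
              simp
            have hp' : 0 < p.length := List.length_pos_iff.2 hp
            omega
          exact ih t htlen ⟨p ++ p, by simp⟩ ht htw h2
      · refine ⟨p, s, hp, hs, rfl, ?_⟩
        rcases lexlt_trichotomy p s with h1 | h1 | h1
        · simpa using lexll_append p s [] h1 hpre
        · exact absurd (h1 ▸ List.prefix_refl p) hpre
        · -- s ≺ p gives s ≺ p ++ s = w, contradicting w ≺ s
          exact absurd (List.Lex.append_right _ s h1) (fun h => lexlt_asymm hws h)

end aux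

theorem stmt6 {α : Type*} [LinearOrder α] (w : List α)
    (hw : w ≠ []) (h : ¬ IsInvLyndonWord w) :
    ∃ p s : List α, p ≠ [] ∧ s ≠ [] ∧ w = p ++ s ∧
      IsInvLyndonWord p ∧ LexLl p s := by
  suffices main : ∀ n (w : List α), w.length ≤ n → w ≠ [] → ¬ IsInvLyndonWord w →
      ∃ p s : List α, p ≠ [] ∧ s ≠ [] ∧ w = p ++ s ∧ IsInvLyndonWord p ∧ LexLl p s from
    main w.length w le_rfl hw h
  clear hw h w
  intro n
  induction n with
  | zero => intro w hn hw _; exact absurd (List.length_eq_zero_iff.1 (Nat.le_zero.1 hn)) hw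
  | succ n ih =>
  intro w hn hw h
  -- get a bad suffix
  simp only [IsInvLyndonWord, not_and, not_forall] at h
  obtain ⟨s₀, hsuf, hsw, hs₀, hns⟩ := h hw
  have hws : LexLt w s₀ := by
    rcases lexlt_trichotomy s₀ w with h1 | h1 | h1
    · exact absurd h1 hns
    · exact absurd h1 hsw
    · exact h1
  obtain ⟨p, s, hp, hs, rfl, hll⟩ :=
    descent w s₀.length s₀ le_rfl hsuf hs₀ hsw hws
  by_cases hpl : IsInvLyndonWord p
  · exact ⟨p, s, hp, hs, rfl, hpl, hll⟩
  · have hplen : p.length ≤ n := by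
      have hs' : 0 < s.length := List.length_pos_iff.2 hs
      simp only [List.length_append] at hn
      omega
    obtain ⟨p', s', hp', hs', hpe, hpl', hll'⟩ := ih p hplen hp hpl
    refine ⟨p', s' ++ s, hp', by simp [hs'], by rw [hpe, List.append_assoc], hpl', ?_⟩
    obtain ⟨h1, h2⟩ := hll'
    have hnp : ¬ p' <+: s' := by
      intro hpre
      rcases eq_or_ne p' s' with rfl | hne
      · exact lexlt_asymm h1 h1
      · exact h2 ⟨hpre, hne⟩
    exact lexll_append p' s' s h1 hnp
end

section
/- If a nonempty word w is not an inverse Lyndon word, then Pref_bre(w) contains exactly one pair. -/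
def IsBre {α : Type*} [LinearOrder α] (w p pb : List α) : Prop :=
  IsInvLyndonWord p ∧
  (∃ v : List α, v ≠ [] ∧ w = p ++ v ∧ pb <+: v) ∧
  pb ≠ [] ∧ IsInvLyndonWord pb ∧
  (∀ z' : List α, z' ≠ [] → z' <+: pb → z' ≠ pb → IsInvLyndonWord (p ++ z')) ∧
  ¬ IsInvLyndonWord (p ++ pb) ∧ LexLl p pb

section helpers
variable {α : Type*} [LinearOrder α]

theorem lexLt_trans {x y z : List α} (h1 : LexLt x y) (h2 : LexLt y z) : LexLt x z :=
  lt_trans (a := x) h1 h2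

theorem lexLt_asymm {x y : List α} (h1 : LexLt x y) (h2 : LexLt y x) : False :=
  lt_asymm (a := x) h1 h2

theorem lexLt_irrefl (x : List α) (h : LexLt x x) : False := lt_irrefl x h

theorem lexLt_of_not {x y : List α} (h : ¬ LexLt x y) (hne : x ≠ y) : LexLt y x := by
  rcases lt_trichotomy x y with h' | h' | h'
  · exact absurd h' h
  · exact absurd h' hne
  · exact h'

theorem lexLt_iff : ∀ (x y : List α), LexLt x y ↔
    (x <+: y ∧ x.length < y.length) ∨
    ∃ i, ∃ (h₁ : i < x.length) (h₂ : i < y.length), x.take i = y.take i ∧ x[i] < y[i]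
  | [], [] => by
    constructor
    · rintro ⟨⟩
    · rintro (⟨-, h⟩ | ⟨i, h, -⟩) <;> simp at h
  | [], b :: ys => by
    constructor
    · intro _; exact Or.inl ⟨List.nil_prefix, by simp⟩
    · intro _; exact List.Lex.nil
  | a :: xs, [] => by
    constructor
    · rintro ⟨⟩
    · rintro (⟨h, -⟩ | ⟨i, -, h, -⟩)
      · simp at h
      · simp at h
  | a :: xs, b :: ys => by
    constructor
    · intro h
      rcases h with _ | h | h
      case cons h =>
        rcases (lexLt_iff xs ys).1 h with ⟨hp, hl⟩ | ⟨i, h₁, h₂, ht, hlt⟩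
        · exact Or.inl ⟨List.cons_prefix_cons.2 ⟨rfl, hp⟩, by simpa using hl⟩
        · refine Or.inr ⟨i + 1, by simpa using h₁, by simpa using h₂, ?_, by simpa using hlt⟩
          simp [List.take_succ_cons, ht]
      case rel h =>
        exact Or.inr ⟨0, by simp, by simp, by simp, by simpa using h⟩
    · rintro (⟨hp, hl⟩ | ⟨i, h₁, h₂, ht, hlt⟩)
      · rcases List.cons_prefix_cons.1 hp with ⟨rfl, hp'⟩
        exact List.Lex.cons ((lexLt_iff xs ys).2 (Or.inl ⟨hp', by simpa using hl⟩))
      · match i with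
        | 0 => exact List.Lex.rel (by simpa using hlt)
        | i + 1 =>
          have hht : a = b ∧ xs.take i = ys.take i := by
            simpa [List.take_succ_cons] using ht
          rcases hht with ⟨rfl, ht'⟩
          exact List.Lex.cons ((lexLt_iff xs ys).2
            (Or.inr ⟨i, by simpa using h₁, by simpa using h₂, ht', by simpa using hlt⟩))

theorem lexLt_of_diff {x y : List α} {i : ℕ} (h₁ : i < x.length) (h₂ : i < y.length)
    (ht : x.take i = y.take i) (hlt : x[i] < y[i]) : LexLt x y :=
  (lexLt_iff x y).2 (Or.inr ⟨i, h₁, h₂, ht, hlt⟩)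

theorem lexLt_of_prefix {x y : List α} (hp : x <+: y) (hl : x.length < y.length) : LexLt x y :=
  (lexLt_iff x y).2 (Or.inl ⟨hp, hl⟩)

theorem eq_of_take_eq {x y : List α} {i t : ℕ} (ht : x.take i = y.take i) (h : t < i)
    (h₁ : t < x.length) (h₂ : t < y.length) : x[t] = y[t] := by
  have e : (x.take i)[t]'(by simp; omega) = (y.take i)[t]'(by simp; omega) := by simp_rw [ht]
  simpa [List.getElem_take] using e

theorem take_eq_of_pointwise {x y : List α} {i : ℕ} (h₁ : i ≤ x.length) (h₂ : i ≤ y.length)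
    (h : ∀ t (ht : t < i), x[t]'(lt_of_lt_of_le ht h₁) = y[t]'(lt_of_lt_of_le ht h₂)) :
    x.take i = y.take i := by
  apply List.ext_getElem (by simp; omega)
  intro n hn₁ hn₂
  have hni : n < i := by simp [List.length_take] at hn₁; omega
  simpa [List.getElem_take] using h n hni

/-- single letters are inverse Lyndon words -/
theorem isInv_singleton (a : α) : IsInvLyndonWord [a] := by
  refine ⟨by simp, fun s hs hne hnil => ?_⟩
  rcases List.suffix_cons_iff.1 hs with h | h
  · exact absurd h hne
  · simp at h; exact absurd h hnil

/-- prefixes of inverse Lyndon words are inverse Lyndon -/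
theorem isInv_append_left {x y : List α} (h : IsInvLyndonWord (x ++ y)) (hx : x ≠ []) :
    IsInvLyndonWord x := by
  refine ⟨hx, fun s hs hne hnil => ?_⟩
  have hsl : s.length < x.length := by
    rcases List.IsSuffix.length_le hs |>.lt_or_eq with h' | h'
    · exact h'
    · exact absurd (List.IsSuffix.eq_of_length hs h') hne
  have hsy : s ++ y <:+ x ++ y := by
    rcases hs with ⟨t, rfl⟩
    exact ⟨t, by simp⟩
  have hlex : LexLt (s ++ y) (x ++ y) := by
    refine h.2 (s ++ y) hsy ?_ ?_
    · intro hcontra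
      have := congrArg List.length hcontra
      simp only [List.length_append] at this
      omega
    · intro hcontra
      exact hnil (List.append_eq_nil_iff.1 hcontra).1
  have hpoint : ∀ t (ht : t < s.length), (s ++ y)[t]'(by simp; omega) = s[t] := fun t ht => by
    rw [List.getElem_append_left]
  have hpointx : ∀ t (ht : t < x.length), (x ++ y)[t]'(by simp; omega) = x[t] := fun t ht => by
    rw [List.getElem_append_left]
  rcases (lexLt_iff _ _).1 hlex with ⟨hp, hl⟩ | ⟨i, h₁, h₂, ht, hlt⟩
  · -- s ++ y prefix of x ++ y with |s| < |x| : s is a prefix of x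
    have hsp : s <+: x :=
      List.prefix_of_prefix_length_le ((List.prefix_append s y).trans hp)
        (List.prefix_append x y) hsl.le
    exact lexLt_of_prefix hsp hsl
  · by_cases hi : i < s.length
    · refine lexLt_of_diff hi (by omega) ?_ ?_
      · refine take_eq_of_pointwise hi.le (by omega) (fun t ht' => ?_)
        have := eq_of_take_eq ht ht' (by omega) (by simp; omega)
        rw [hpoint t (by omega), hpointx t (by omega)] at this
        exact this
      · have := hlt
        rw [hpoint i hi, hpointx i (by omega)] at this
        exact this
    · -- i ≥ |s| : s is a prefix of x
      push_neg at hi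
      have hsp : s <+: x := by
        rw [List.prefix_iff_eq_take]
        apply List.ext_getElem (by simp; omega)
        intro n hn₁ hn₂
        have hns : n < s.length := hn₁
        have := eq_of_take_eq (t := n) ht (by omega) (by simp; omega) (by simp; omega)
        rw [hpoint n hns, hpointx n (by omega)] at this
        simpa [List.getElem_take] using this
      exact lexLt_of_prefix hsp hsl
end helpers

theorem getElem_of_eq' {α : Type*} {x y : List α} (h : x = y) {t : ℕ} (ht : t < x.length) :
    x[t] = y[t]'(h ▸ ht) := by subst h; rfl

theorem getElem_idx_congr {α : Type*} {x : List α} {a b : ℕ} (h : a = b) (ha : a < x.length) :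
    x[a] = x[b]'(h ▸ ha) := by subst h; rfl

section mainlemmas
variable {α : Type*} [LinearOrder α]

/-- a "period + strict jump" inside positions `≤ m` must end exactly at `m`,
given that all prefixes of length `≤ m` are inverse Lyndon. -/
theorem jump_eq (w : List α) {m i j : ℕ}
    (hInv : ∀ T, 1 ≤ T → T ≤ m → IsInvLyndonWord (w.take T))
    (hmw : m < w.length)
    (hi : 1 ≤ i) (hij : i + j ≤ m)
    (hper : ∀ t (ht : t < j), w[t]'(by omega) = w[i+t]'(by omega))
    (hjump : w[j]'(by omega) < w[i+j]'(by omega)) : i + j = m := by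
  by_contra hne
  have hT : i + j + 1 ≤ m := by omega
  have hWlen : (w.take (i+j+1)).length = i + j + 1 := by
    simp [List.length_take]; omega
  have hW : IsInvLyndonWord (w.take (i+j+1)) := hInv _ (by omega) hT
  have hslen : ((w.take (i+j+1)).drop i).length = j + 1 := by
    simp [hWlen]; omega
  have hWpt : ∀ t (ht : t < i + j + 1), (w.take (i+j+1))[t]'(by omega) = w[t]'(by omega) := by
    intro t ht
    simp [List.getElem_take]
  have hspt : ∀ t (ht : t < j + 1),
      ((w.take (i+j+1)).drop i)[t]'(by rw [hslen]; omega) = w[i+t]'(by omega) := by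
    intro t ht
    rw [List.getElem_drop]
    exact hWpt (i + t) (by omega)
  have hlex : LexLt ((w.take (i+j+1)).drop i) (w.take (i+j+1)) := by
    refine hW.2 _ (List.drop_suffix i _) (fun hc => ?_) (fun hc => ?_)
    · have := congrArg List.length hc; rw [hslen, hWlen] at this; omega
    · have := congrArg List.length hc; rw [hslen] at this; simp at this
  rcases (lexLt_iff _ _).1 hlex with ⟨hp, hl⟩ | ⟨i', h₁, h₂, ht, hlt⟩
  · -- prefix case : s[j] = W[j], contradicting the jump
    have e : (w.take (i+j+1)).drop i = (w.take (i+j+1)).take (j+1) := by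
      have := List.prefix_iff_eq_take.1 hp
      rwa [hslen] at this
    have e2 := getElem_of_eq' e (t := j) (by rw [hslen]; omega)
    rw [List.getElem_take] at e2
    rw [hspt j (by omega), hWpt j (by omega)] at e2
    exact absurd e2 (ne_of_gt hjump)
  · have hi' : i' < j + 1 := by rwa [hslen] at h₁
    rcases Nat.lt_or_ge i' j with hlt' | hge
    · have e := hlt
      rw [hspt i' (by omega), hWpt i' (by omega)] at e
      have := hper i' hlt'
      rw [← this] at e
      exact lt_irrefl _ e
    · have hij' : i' = j := by omega
      subst hij'
      have e := hlt
      rw [hspt i' (by omega), hWpt i' (by omega)] at e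
      exact absurd e (not_lt_of_gt hjump)

/-- two distinct period+jump decompositions ending at `m` are impossible when the
suffix of `w.take (m+1)` at the smaller index is inverse Lyndon. -/
theorem two_jumps (w : List α) {m i₁ i₂ j₁ j₂ : ℕ}
    (h12 : i₁ < i₂) (hm : m < w.length) (h₁1 : 1 ≤ i₁)
    (hs₁ : i₁ + j₁ = m) (hs₂ : i₂ + j₂ = m)
    (hper₁ : ∀ t (ht : t < j₁), w[t]'(by omega) = w[i₁+t]'(by omega))
    (hper₂ : ∀ t (ht : t < j₂), w[t]'(by omega) = w[i₂+t]'(by omega))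
    (hjump₂ : w[j₂]'(by omega) < w[i₂+j₂]'(by omega))
    (hInv₁ : IsInvLyndonWord ((w.take (m+1)).drop i₁)) : False := by
  have hj21 : j₂ < j₁ := by omega
  have hulen : (w.take (m+1)).length = m + 1 := by simp [List.length_take]; omega
  have hupt : ∀ t (ht : t < m + 1), (w.take (m+1))[t]'(by rw [hulen]; omega) = w[t]'(by omega) := by
    intro t ht; simp [List.getElem_take]
  have hd₁pt : ∀ t (ht : t < m + 1 - i₁), ((w.take (m+1)).drop i₁)[t]'(by simp [hulen]; omega)
      = w[i₁+t]'(by omega) := by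
    intro t ht
    rw [List.getElem_drop]
    exact hupt (i₁ + t) (by omega)
  have hd₂pt : ∀ t (ht : t < m + 1 - i₂), ((w.take (m+1)).drop i₂)[t]'(by simp [hulen]; omega)
      = w[i₂+t]'(by omega) := by
    intro t ht
    rw [List.getElem_drop]
    exact hupt (i₂ + t) (by omega)
  have hSsuffix : (w.take (m+1)).drop i₂ <:+ (w.take (m+1)).drop i₁ := by
    have : ((w.take (m+1)).drop i₁).drop (i₂ - i₁) = (w.take (m+1)).drop i₂ := by
      rw [List.drop_drop]
      congr 1
      omega
    rw [← this]
    exact List.drop_suffix _ _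
  have hlex1 : LexLt ((w.take (m+1)).drop i₂) ((w.take (m+1)).drop i₁) := by
    refine hInv₁.2 _ hSsuffix (fun hc => ?_) (fun hc => ?_)
    · have := congrArg List.length hc
      simp [hulen] at this
      omega
    · have := congrArg List.length hc
      simp [hulen] at this
      omega
  have hlex2 : LexLt ((w.take (m+1)).drop i₁) ((w.take (m+1)).drop i₂) := by
    refine lexLt_of_diff (i := j₂) (by simp [hulen]; omega) (by simp [hulen]; omega) ?_ ?_
    · refine take_eq_of_pointwise (by simp [hulen]; omega) (by simp [hulen]; omega) ?_
      intro t ht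
      rw [hd₁pt t (by omega), hd₂pt t (by omega), ← hper₁ t (by omega), ← hper₂ t (by omega)]
    · rw [hd₁pt j₂ (by omega), hd₂pt j₂ (by omega), ← hper₁ j₂ (by omega)]
      exact hjump₂
  exact lexLt_asymm hlex1 hlex2
end mainlemmas

theorem stmt9 {α : Type*} [LinearOrder α] (w : List α)
    (hw : w ≠ []) (h : ¬ IsInvLyndonWord w) :
    ∃! q : List α × List α, IsBre w q.1 q.2 := by
  classical
  have hwlen : 0 < w.length := List.length_pos_iff.2 hw
  -- m : length of the longest inverse Lyndon prefix of w
  set m := Nat.findGreatest (fun t => IsInvLyndonWord (w.take t)) w.length with hmdef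
  have hP1 : IsInvLyndonWord (w.take 1) := by
    obtain ⟨a, t, e⟩ := List.exists_cons_of_ne_nil hw
    rw [e]
    simpa using isInv_singleton a
  have hm1 : 1 ≤ m := Nat.le_findGreatest hwlen hP1
  have hmlew : m ≤ w.length := Nat.findGreatest_le _
  have hPm : IsInvLyndonWord (w.take m) :=
    Nat.findGreatest_spec (P := fun t => IsInvLyndonWord (w.take t)) hwlen hP1
  have hmw : m < w.length := by
    rcases hmlew.lt_or_eq with h' | h'
    · exact h'
    · exfalso
      apply h
      have := hPm
      rwa [h', List.take_length] at this
  -- all short prefixes are inverse Lyndon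
  have hInvPref : ∀ T, 1 ≤ T → T ≤ m → IsInvLyndonWord (w.take T) := by
    intro T h1 hT
    have e : (w.take m).take T = w.take T := by rw [List.take_take, min_eq_left hT]
    have h' : IsInvLyndonWord ((w.take m).take T ++ (w.take m).drop T) := by
      rw [List.take_append_drop]; exact hPm
    have hne : (w.take m).take T ≠ [] := by
      rw [e]
      exact List.length_pos_iff.1 (by rw [List.length_take]; omega)
    have := isInv_append_left h' hne
    rwa [e] at this
  -- inverse Lyndon prefixes have length at most m
  have hMaxPref : ∀ x : List α, x <+: w → IsInvLyndonWord x → x.length ≤ m := by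
    intro x hp hx
    by_contra hcon
    push_neg at hcon
    refine Nat.findGreatest_is_greatest (P := fun t => IsInvLyndonWord (w.take t))
      hcon hp.length_le ?_
    show IsInvLyndonWord (w.take x.length)
    rwa [← List.prefix_iff_eq_take.1 hp]
  have hulen : (w.take (m+1)).length = m + 1 := by rw [List.length_take]; omega
  have hnotu : ¬ IsInvLyndonWord (w.take (m+1)) :=
    Nat.findGreatest_is_greatest (P := fun t => IsInvLyndonWord (w.take t)) (n := w.length)
      (by omega) (by omega)
  have hupt : ∀ t (ht : t < m + 1), (w.take (m+1))[t]'(by rw [hulen]; omega) = w[t]'(by omega) := by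
    intro t ht; simp [List.getElem_take]
  have hdpt : ∀ i t (ht : i + t < m + 1),
      ((w.take (m+1)).drop i)[t]'(by simp [hulen]; omega) = w[i+t]'(by omega) := by
    intro i t ht
    rw [List.getElem_drop]
    exact hupt (i + t) (by omega)
  -- existence of a failing suffix index
  have hex : ∃ i, (1 ≤ i ∧ i ≤ m) ∧ ¬ LexLt ((w.take (m+1)).drop i) (w.take (m+1)) := by
    by_contra hcon
    push_neg at hcon
    apply hnotu
    refine ⟨by intro hc; rw [hc] at hulen; simp at hulen, fun s hs hne hnil => ?_⟩
    have hsd : s = (w.take (m+1)).drop ((w.take (m+1)).length - s.length) :=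
      List.suffix_iff_eq_drop.1 hs
    have hslt : s.length < m + 1 := by
      rcases hs.length_le.lt_or_eq with h' | h'
      · omega
      · exact absurd (hs.eq_of_length h') hne
    have hsge : 1 ≤ s.length := by
      rcases Nat.eq_zero_or_pos s.length with h' | h'
      · exact absurd (List.eq_nil_of_length_eq_zero h') hnil
      · omega
    rw [hsd, hulen]
    exact hcon (m + 1 - s.length) ⟨by omega, by omega⟩
  set Q : ℕ → Prop :=
    fun i => (1 ≤ i ∧ i ≤ m) ∧ ¬ LexLt ((w.take (m+1)).drop i) (w.take (m+1)) with hQdef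
  set k := Nat.findGreatest Q m with hkdef
  obtain ⟨i₀, hi₀c, hi₀⟩ := hex
  have hQi₀ : Q i₀ := ⟨hi₀c, hi₀⟩
  have hk1 : 1 ≤ k := le_trans hi₀c.1 (Nat.le_findGreatest (P := Q) hi₀c.2 hQi₀)
  have hkm : k ≤ m := Nat.findGreatest_le _
  have hQkfull : Q k := Nat.findGreatest_spec (P := Q) hi₀c.2 hQi₀
  have hQk : ¬ LexLt ((w.take (m+1)).drop k) (w.take (m+1)) := hQkfull.2
  have hmax : ∀ i, k < i → i ≤ m → LexLt ((w.take (m+1)).drop i) (w.take (m+1)) := by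
    intro i h1 h2
    by_contra hc
    exact Nat.findGreatest_is_greatest (P := Q) h1 h2 ⟨⟨by omega, h2⟩, hc⟩
  -- w.take(m+1) ≺ its suffix at k, with a strict difference
  have hune : (w.take (m+1)).drop k ≠ w.take (m+1) := by
    intro hc
    have := congrArg List.length hc
    simp [hulen] at this
    omega
  have hult : LexLt (w.take (m+1)) ((w.take (m+1)).drop k) := lexLt_of_not hQk hune
  obtain ⟨j, hj₁, hj₂, hjt, hjlt⟩ :
      ∃ j, ∃ (h₁ : j < (w.take (m+1)).length) (h₂ : j < ((w.take (m+1)).drop k).length),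
        (w.take (m+1)).take j = ((w.take (m+1)).drop k).take j ∧
        (w.take (m+1))[j] < ((w.take (m+1)).drop k)[j] := by
    rcases (lexLt_iff _ _).1 hult with ⟨hp, hl⟩ | hd
    · exfalso
      simp [hulen] at hl
      omega
    · exact hd
  have hjm : j < m + 1 - k := by simpa [hulen] using hj₂
  -- pointwise period and jump on w
  have hper : ∀ t (ht : t < j), w[t]'(by omega) = w[k+t]'(by omega) := by
    intro t ht
    have := eq_of_take_eq (t := t) hjt ht (by omega) (by simp [hulen]; omega)
    rwa [hupt t (by omega), hdpt k t (by omega)] at this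
  have hjump : w[j]'(by omega) < w[k+j]'(by omega) := by
    have := hjlt
    rwa [hupt j (by omega), hdpt k j (by omega)] at this
  have hkjm : k + j = m := jump_eq w hInvPref hmw hk1 (by omega) hper hjump
  -- j < k
  have hjk : j < k := by
    by_contra hc
    push_neg at hc
    have h2k : 2 * k ≤ m := by omega
    have hlex2k : LexLt (w.take (m+1)) ((w.take (m+1)).drop (2*k)) := by
      refine lexLt_of_diff (i := j - k) (by rw [hulen]; omega) (by simp [hulen]; omega) ?_ ?_
      · refine take_eq_of_pointwise (by rw [hulen]; omega) (by simp [hulen]; omega) ?_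
        intro t ht
        rw [hupt t (by omega), hdpt (2*k) t (by omega)]
        rw [hper t (by omega), hper (k + t) (by omega)]
        exact getElem_idx_congr (by omega) (by omega)
      · rw [hupt (j-k) (by omega), hdpt (2*k) (j-k) (by omega)]
        have e1 : w[j-k]'(by omega) = w[j]'(by omega) := by
          rw [hper (j-k) (by omega)]
          exact getElem_idx_congr (by omega) (by omega)
        have e2 : w[2*k+(j-k)]'(by omega) = w[k+j]'(by omega) :=
          getElem_idx_congr (by omega) (by omega)
        rw [e1, e2]
        exact hjump
    exact lexLt_asymm hlex2k (hmax (2*k) (by omega) (by omega))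
  have pblen : ((w.take (m+1)).drop k).length = m + 1 - k := by
    rw [List.length_drop, hulen]
  have hpw : (w.take (m+1)).take k = w.take k := by
    rw [List.take_take, min_eq_left (by omega)]
  have plen : ((w.take (m+1)).take k).length = k := by
    rw [hpw, List.length_take]; omega
  -- components of the pair
  have hInvp : IsInvLyndonWord ((w.take (m+1)).take k) := by
    rw [hpw]; exact hInvPref k hk1 hkm
  have hInvpb : IsInvLyndonWord ((w.take (m+1)).drop k) := by
    refine ⟨List.length_pos_iff.1 (by omega), fun s hs hne hnil => ?_⟩
    have hsle : s.length ≤ m + 1 - k := by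
      have := hs.length_le; omega
    have hslt : s.length < m + 1 - k := by
      rcases hsle.lt_or_eq with h' | h'
      · exact h'
      · exact absurd (hs.eq_of_length (by omega)) hne
    have hsge : 1 ≤ s.length := by
      rcases Nat.eq_zero_or_pos s.length with h' | h'
      · exact absurd (List.eq_nil_of_length_eq_zero h') hnil
      · omega
    have hsd := List.suffix_iff_eq_drop.1 hs
    rw [pblen, List.drop_drop] at hsd
    have hlex := hmax (k + (m + 1 - k - s.length)) (by omega) (by omega)
    rw [← hsd] at hlex
    exact lexLt_trans hlex hult
  have hllp : LexLl ((w.take (m+1)).take k) ((w.take (m+1)).drop k) := by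
    constructor
    · refine lexLt_of_diff (i := j) (by omega) (by omega) ?_ ?_
      · refine take_eq_of_pointwise (by omega) (by omega) ?_
        intro t ht
        rw [List.getElem_take, hupt t (by omega), List.getElem_drop, hupt (k+t) (by omega)]
        exact hper t ht
      · rw [List.getElem_take, hupt j (by omega), List.getElem_drop, hupt (k+j) (by omega)]
        exact hjump
    · rintro ⟨hpre, -⟩
      have e := List.prefix_iff_eq_take.1 hpre
      rw [plen] at e
      have e2 := getElem_of_eq' e (t := j) (by omega)
      rw [List.getElem_take] at e2
      rw [hupt j (by omega)] at e2
      rw [List.getElem_take] at e2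
      rw [List.getElem_drop] at e2
      rw [hupt (k+j) (by omega)] at e2
      exact absurd e2 (ne_of_lt hjump)
  refine ⟨((w.take (m+1)).take k, (w.take (m+1)).drop k), ⟨hInvp, ?_, ?_, hInvpb, ?_, ?_, hllp⟩, ?_⟩
  · -- the factorization w = p ++ v with pb a prefix of v
    refine ⟨w.drop k, ?_, ?_, ?_⟩
    · exact List.length_pos_iff.1 (by rw [List.length_drop]; omega)
    · rw [hpw]; exact (List.take_append_drop k w).symm
    · rw [List.drop_take]
      exact List.take_prefix _ _
  · rw [← List.length_pos_iff, pblen]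
    omega
  · -- proper prefixes z' of pb give inverse Lyndon words p ++ z'
    intro z' hz'ne hz'p hz'pb
    have hzle : z'.length ≤ m + 1 - k := by
      have := hz'p.length_le
      rw [pblen] at this
      omega
    have hzlt : z'.length < m + 1 - k := by
      rcases hzle.lt_or_eq with h' | h'
      · exact h'
      · exact absurd (hz'p.eq_of_length (by rw [pblen]; omega)) hz'pb
    have hz1 : 1 ≤ z'.length := by
      rcases Nat.eq_zero_or_pos z'.length with h' | h'
      · exact absurd (List.eq_nil_of_length_eq_zero h') hz'ne
      · omega
    have e1 := List.prefix_iff_eq_take.1 hz'p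
    have e2 : (w.take (m+1)).take k ++ ((w.take (m+1)).drop k).take z'.length
        = (w.take (m+1)).take (k + z'.length) := List.take_add.symm
    have e3 : (w.take (m+1)).take (k + z'.length) = w.take (k + z'.length) := by
      rw [List.take_take, min_eq_left (by omega)]
    rw [e1, e2, e3]
    exact hInvPref (k + z'.length) (by omega) (by omega)
  · rw [List.take_append_drop]
    exact hnotu
  · -- uniqueness
    intro q hq
    obtain ⟨p₁, pb₁⟩ := q
    dsimp only at hq ⊢
    obtain ⟨hInv₁, ⟨v₁, hv₁ne, hwv₁, hpbv₁⟩, hpb₁ne, hInvpb₁, hz₁, hnot₁, hll₁⟩ := hq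
    have hppre : p₁ ++ pb₁ <+: w := by
      rw [hwv₁]; exact (List.prefix_append_right_inj p₁).2 hpbv₁
    have hp₁len : 1 ≤ p₁.length := List.length_pos_iff.2 hInv₁.1
    have hpb₁len : 1 ≤ pb₁.length := List.length_pos_iff.2 hpb₁ne
    have hL1 : p₁.length + pb₁.length ≤ m + 1 := by
      by_cases hc : pb₁.length = 1
      · have := hMaxPref p₁ ⟨v₁, hwv₁.symm⟩ hInv₁
        omega
      · have hz'1 : 1 ≤ pb₁.dropLast.length := by rw [List.length_dropLast]; omega
        have hInvz := hz₁ pb₁.dropLast (List.length_pos_iff.1 hz'1) (List.dropLast_prefix pb₁)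
          (fun hc' => by
            have := congrArg List.length hc'
            rw [List.length_dropLast] at this
            omega)
        have hpre2 : p₁ ++ pb₁.dropLast <+: w :=
          ((List.prefix_append_right_inj p₁).2 (List.dropLast_prefix pb₁)).trans hppre
        have := hMaxPref _ hpre2 hInvz
        rw [List.length_append, List.length_dropLast] at this
        omega
    have hL2 : m + 1 ≤ p₁.length + pb₁.length := by
      by_contra hc
      push_neg at hc
      apply hnot₁
      have e : p₁ ++ pb₁ = w.take (p₁.length + pb₁.length) := by
        have := List.prefix_iff_eq_take.1 hppre
        rwa [List.length_append] at this
      rw [e]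
      exact hInvPref _ (by omega) (by omega)
    have hLeq : p₁.length + pb₁.length = m + 1 := le_antisymm hL1 hL2
    have hLu : p₁ ++ pb₁ = w.take (m+1) := by
      have e := List.prefix_iff_eq_take.1 hppre
      rw [List.length_append, hLeq] at e
      exact e
    have hp₁ : p₁ = (w.take (m+1)).take p₁.length := by rw [← hLu, List.take_left]
    have hpb₁ : pb₁ = (w.take (m+1)).drop p₁.length := by rw [← hLu, List.drop_left]
    have hk₁m : p₁.length ≤ m := by omega
    -- extract the strict difference of p₁ and pb₁
    have hdiff : ∃ j₁, ∃ (h₁ : j₁ < p₁.length) (h₂ : j₁ < pb₁.length),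
        p₁.take j₁ = pb₁.take j₁ ∧ p₁[j₁] < pb₁[j₁] := by
      rcases (lexLt_iff p₁ pb₁).1 hll₁.1 with ⟨hpre, hlen⟩ | hd
      · exact absurd ⟨hpre, fun he => by rw [he] at hlen; omega⟩ hll₁.2
      · exact hd
    obtain ⟨j₁, hj₁a, hj₁b, hj₁t, hj₁lt⟩ := hdiff
    have hp₁pt : ∀ t (ht : t < p₁.length), p₁[t] = w[t]'(by omega) := by
      intro t ht
      have e := getElem_of_eq' hp₁ (t := t) ht
      rw [List.getElem_take, hupt t (by omega)] at e
      exact e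
    have hpb₁pt : ∀ t (ht : t < pb₁.length), pb₁[t] = w[p₁.length + t]'(by omega) := by
      intro t ht
      have e := getElem_of_eq' hpb₁ (t := t) ht
      rw [List.getElem_drop, hupt (p₁.length + t) (by omega)] at e
      exact e
    have hper₁ : ∀ t (ht : t < j₁), w[t]'(by omega) = w[p₁.length + t]'(by omega) := by
      intro t ht
      have e := eq_of_take_eq (t := t) hj₁t ht (by omega) (by omega)
      rwa [hp₁pt t (by omega), hpb₁pt t (by omega)] at e
    have hjump₁ : w[j₁]'(by omega) < w[p₁.length + j₁]'(by omega) := by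
      have e := hj₁lt
      rwa [hp₁pt j₁ (by omega), hpb₁pt j₁ (by omega)] at e
    have hk₁j₁ : p₁.length + j₁ = m :=
      jump_eq w hInvPref hmw (by omega) (by omega) hper₁ hjump₁
    have hkk₁ : p₁.length = k := by
      by_contra hne'
      rcases lt_or_gt_of_ne hne' with hlt' | hgt'
      · refine two_jumps w hlt' hmw (by omega) hk₁j₁ hkjm hper₁ hper hjump ?_
        rw [← hpb₁]
        exact hInvpb₁
      · exact two_jumps w hgt' hmw (by omega) hkjm hk₁j₁ hper hper₁ hjump₁ hInvpb
    rw [hp₁, hpb₁, hkk₁]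
end

section
/- If a nonempty word w has no prefix of the form r a u r b with r, u words and a, b letters satisfying a < b, then w is an inverse Lyndon word. -/
private lemma lex_decomp {α : Type*} [LinearOrder α] :
    ∀ {w s : List α}, List.Lex (· < ·) w s →
      w <+: s ∨ ∃ (r x y : List α) (a b : α), a < b ∧ w = r ++ a :: x ∧ s = r ++ b :: y := by
  intro w s hl
  induction hl with
  | nil => exact Or.inl List.nil_prefix
  | @cons a l₁ l₂ h ih =>
      rcases ih with hp | ⟨r, x, y, a', b, hab, h1, h2⟩
      · left
        obtain ⟨t, ht⟩ := hp
        exact ⟨t, by simp [← ht]⟩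
      · right
        exact ⟨a :: r, x, y, a', b, hab, by simp [h1], by simp [h2]⟩
  | @rel a l₁ b l₂ hab =>
      right
      exact ⟨[], l₁, l₂, a, b, hab, rfl, rfl⟩

private lemma lex_append_cons {α : Type*} [LinearOrder α] {a b : α} (hab : a < b) :
    ∀ (t x y : List α), List.Lex (· < ·) (t ++ a :: x) (t ++ b :: y) := by
  intro t x y
  induction t with
  | nil => exact List.Lex.rel hab
  | cons c t ih => exact List.Lex.cons ih

private lemma lex_total {α : Type*} [LinearOrder α] {s w : List α}
    (h1 : ¬ List.Lex (· < ·) s w) (h2 : s ≠ w) : List.Lex (· < ·) w s := by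
  by_contra h3
  exact h2 (Std.Trichotomous.trichotomous s w h1 h3)

private lemma aux {α : Type*} [LinearOrder α] (w : List α)
    (h : ∀ (r u : List α) (a b : α), a < b →
      ¬ (r ++ [a] ++ u ++ r ++ [b]) <+: w) :
    ∀ n (s : List α), s.length ≤ n → s <:+ w → s ≠ w → s ≠ [] →
      List.Lex (· < ·) s w := by
  intro n
  induction n with
  | zero =>
      intro s hlen _ _ hne
      simp [List.length_eq_zero_iff.mp (Nat.le_zero.mp hlen)] at hne
  | succ n ih =>
      intro s hlen hsuf hne hnil
      by_contra hcon
      have hws : List.Lex (· < ·) w s := lex_total hcon hne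
      obtain ⟨p, hp⟩ := hsuf
      have hpne : p ≠ [] := by
        rintro rfl; exact hne (by simpa using hp)
      rcases lex_decomp hws with hpre | ⟨r, x, y, a, b, hab, hw, hs⟩
      · -- w <+: s impossible by length
        have := List.IsPrefix.length_le hpre
        have hls : s.length < w.length := by
          rw [← hp, List.length_append]
          have : 0 < p.length := List.length_pos_iff.mpr hpne
          omega
        omega
      · by_cases hle : r.length + 1 ≤ p.length
        · -- r ++ [a] is a prefix of p
          have hra : r ++ [a] <+: w := ⟨x, by simp [hw]⟩
          have hpw : p <+: w := ⟨s, hp⟩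
          have hrp : r ++ [a] <+: p :=
            List.prefix_of_prefix_length_le hra hpw (by simpa using hle)
          obtain ⟨u, hu⟩ := hrp
          refine h r u a b hab ⟨y, ?_⟩
          rw [← hp, ← hu, hs]
          simp
        · -- p is a prefix of r
          have hrw : r <+: w := ⟨a :: x, by simp [hw]⟩
          have hpw : p <+: w := ⟨s, hp⟩
          have hpr : p <+: r :=
            List.prefix_of_prefix_length_le hpw hrw (by omega)
          obtain ⟨t, ht⟩ := hpr
          -- w = p ++ s, w = p ++ t ++ a :: x  ⇒ s = t ++ a :: x
          have hseq : s = t ++ a :: x := by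
            have : p ++ s = p ++ (t ++ a :: x) := by
              rw [hp, hw, ← ht]; simp
            exact List.append_cancel_left this
          -- s = r ++ b :: y = p ++ (t ++ b :: y)
          have hs2suf : (t ++ b :: y) <:+ w := by
            refine List.IsSuffix.trans ⟨p, ?_⟩ ⟨p, hp⟩
            rw [hs, ← ht]; simp
          have hlen2 : (t ++ b :: y).length < s.length := by
            have h1 : s.length = p.length + (t ++ b :: y).length := by
              rw [hs, ← ht]; simp
            have : 0 < p.length := List.length_pos_iff.mpr hpne
            omega
          have hls : s.length < w.length := by
            rw [← hp, List.length_append]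
            have : 0 < p.length := List.length_pos_iff.mpr hpne
            omega
          have hne2 : (t ++ b :: y) ≠ w := by
            intro hEq
            have := congrArg List.length hEq
            omega
          have hlex2 : List.Lex (· < ·) (t ++ b :: y) w :=
            ih (t ++ b :: y) (by omega) hs2suf hne2 (by simp)
          have hlex1 : List.Lex (· < ·) s (t ++ b :: y) := by
            rw [hseq]; exact lex_append_cons hab t x y
          exact hcon (List.lex_trans (fun h₁ h₂ => lt_trans h₁ h₂) hlex1 hlex2)

theorem stmt10 {α : Type*} [LinearOrder α] (w : List α) (hw : w ≠ [])
    (h : ∀ (r u : List α) (a b : α), a < b →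
      ¬ (r ++ [a] ++ u ++ r ++ [b]) <+: w) :
    IsInvLyndonWord w := by
  refine ⟨hw, fun s hsuf hne hnil => ?_⟩
  exact aux w h s.length s le_rfl hsuf hne hnil
end
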